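/- Let c > 1. There exists γ* > 0 such that for every 0 < γ < γ* there is a unique z* > 0 satisfying ψ₁(z*) = c·ψ₁(z* + γ) (i.e., H_{c,γ}''(z*) = 0 where H_{c,γ}(z) = log Γ(z) − c log Γ(z + γ) + μz for any μ ∈ ℝ), and moreover ψ₂(z*) − c·ψ₂(z* + γ) < 0 at this point. -/

import Mathlib

/-- The digamma function `ψ(x) = (d/dx) log Γ(x)`. -/
noncomputable def digamma (x : ℝ) : ℝ := deriv (fun y => Real.log (Real.Gamma y)) x

/-- The trigamma function `ψ₁ = ψ'`. -/
noncomputable def trigamma : ℝ → ℝ := deriv digamma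

/-- The polygamma function `ψ₂ = ψ₁'`. -/
noncomputable def polygammaTwo : ℝ → ℝ := deriv trigamma

open Filter Finset Topology

namespace Polygamma

/-- partial sums lower bound `min x 1 * (m+1) ≤ x + m` -/
lemma aux_bound {x : ℝ} (hx : 0 < x) (m : ℕ) : min x 1 * (m + 1) ≤ x + m := by
  rcases le_total x 1 with h | h
  · rw [min_eq_left h]; nlinarith [Nat.cast_nonneg (α := ℝ) m]
  · rw [min_eq_right h]; push_cast; nlinarith [Nat.cast_nonneg (α := ℝ) m]

lemma aux_pos {x : ℝ} (hx : 0 < x) (m : ℕ) : 0 < x + m := by positivity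

lemma summable_aux {x : ℝ} (hx : 0 < x) {k : ℕ} (hk : 2 ≤ k) :
    Summable (fun m : ℕ => ((x + m) ^ k)⁻¹) := by
  have h1 : Summable (fun m : ℕ => ((m + 1 : ℝ) ^ k)⁻¹) := by
    have := (Real.summable_nat_pow_inv (p := k)).2 (by omega)
    have := (summable_nat_add_iff (f := fun n : ℕ => ((n : ℝ) ^ k)⁻¹) 1).2 this
    simpa using this
  have hm : 0 < min x 1 := lt_min hx one_pos
  refine Summable.of_nonneg_of_le (fun m => by positivity)
    (fun m => ?_) (h1.mul_left ((min x 1 ^ k)⁻¹))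
  have h2 : min x 1 * (m + 1) ≤ x + m := aux_bound hx m
  have h3 : (0:ℝ) < min x 1 * (m+1) := by positivity
  rw [← mul_inv, ← mul_pow]
  exact inv_anti₀ (by positivity) (pow_le_pow_left₀ h3.le h2 k)

end Polygamma

namespace Polygamma

noncomputable def T (x : ℝ) : ℝ := ∑' m : ℕ, ((x + m) ^ 2)⁻¹
noncomputable def P (x : ℝ) : ℝ := ∑' m : ℕ, (-2) * ((x + m) ^ 3)⁻¹
noncomputable def P2 (x : ℝ) : ℝ := ∑' m : ℕ, 6 * ((x + m) ^ 4)⁻¹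

lemma T_pos {x : ℝ} (hx : 0 < x) : 0 < T x :=
  Summable.tsum_pos (summable_aux hx le_rfl) (fun m => by positivity) 0 (by positivity)

lemma A3_pos {x : ℝ} (hx : 0 < x) : 0 < ∑' m : ℕ, ((x + m) ^ 3)⁻¹ :=
  Summable.tsum_pos (summable_aux hx (by norm_num)) (fun m => by positivity) 0 (by positivity)

lemma A4_pos {x : ℝ} (hx : 0 < x) : 0 < ∑' m : ℕ, ((x + m) ^ 4)⁻¹ :=
  Summable.tsum_pos (summable_aux hx (by norm_num)) (fun m => by positivity) 0 (by positivity)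

lemma P_eq (x : ℝ) : P x = (-2) * ∑' m : ℕ, ((x + m) ^ 3)⁻¹ := tsum_mul_left

lemma P2_eq (x : ℝ) : P2 x = 6 * ∑' m : ℕ, ((x + m) ^ 4)⁻¹ := tsum_mul_left

/-- telescoping sum -/
lemma tsum_telescope {x : ℝ} (hx : 0 < x) :
    ∑' m : ℕ, ((x + m)⁻¹ - (x + (m + 1 : ℕ))⁻¹) = x⁻¹ := by
  have hsum : Tendsto (fun n : ℕ => ∑ m ∈ range n, ((x + m)⁻¹ - (x + (m + 1 : ℕ))⁻¹))
      atTop (𝓝 x⁻¹) := by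
    have he : ∀ n : ℕ, ∑ m ∈ range n, ((x + m)⁻¹ - (x + (m + 1 : ℕ))⁻¹)
        = x⁻¹ - (x + n)⁻¹ := by
      intro n
      have := Finset.sum_range_sub' (f := fun m : ℕ => (x + m)⁻¹) n
      simpa using this
    simp_rw [he]
    have : Tendsto (fun n : ℕ => (x + n)⁻¹) atTop (𝓝 0) := by
      apply Tendsto.comp tendsto_inv_atTop_zero
      exact tendsto_atTop_add_const_left _ x tendsto_natCast_atTop_atTop
    simpa using (tendsto_const_nhds (x := x⁻¹)).sub this
  have hs : Summable (fun m : ℕ => (x + m)⁻¹ - (x + (m + 1 : ℕ))⁻¹) := by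
    refine Summable.of_nonneg_of_le (fun m => ?_) (fun m => ?_) (summable_aux hx le_rfl)
    · have h1 : (0:ℝ) < x + m := aux_pos hx m
      have h2 : x + (m:ℝ) ≤ x + ((m:ℕ)+1:ℕ) := by push_cast; linarith
      simp only [sub_nonneg]
      exact inv_anti₀ h1 h2
    · have h1 : (0:ℝ) < x + m := aux_pos hx m
      have h2 : (0:ℝ) < x + ((m+1:ℕ):ℝ) := aux_pos hx (m+1)
      have key : (x + m)⁻¹ - (x + ((m+1:ℕ):ℝ))⁻¹ = ((x+m) * (x + ((m+1:ℕ):ℝ)))⁻¹ := by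
        push_cast
        field_simp
        ring
      rw [key]
      apply inv_anti₀ (by positivity)
      push_cast
      nlinarith
  have := hs.hasSum.tendsto_sum_nat
  exact tendsto_nhds_unique this hsum

lemma T_le {x : ℝ} (hx : 0 < x) : T x ≤ x⁻¹ + (x ^ 2)⁻¹ := by
  have hshift : T x = (x ^ 2)⁻¹ + ∑' m : ℕ, ((x + (m + 1 : ℕ)) ^ 2)⁻¹ := by
    rw [T, Summable.tsum_eq_zero_add (summable_aux hx le_rfl)]
    norm_num
  rw [hshift]
  have hle : ∑' m : ℕ, ((x + (m + 1 : ℕ)) ^ 2)⁻¹ ≤ x⁻¹ := by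
    rw [← tsum_telescope hx]
    refine Summable.tsum_le_tsum (fun m => ?_) ?_ ?_
    · have h1 : (0:ℝ) < x + m := aux_pos hx m
      have h2 : (0:ℝ) < x + ((m+1:ℕ):ℝ) := aux_pos hx (m+1)
      have key : (x + m)⁻¹ - (x + ((m+1:ℕ):ℝ))⁻¹ = ((x+m) * (x + ((m+1:ℕ):ℝ)))⁻¹ := by
        push_cast; field_simp; ring
      rw [key]
      apply inv_anti₀ (by positivity)
      push_cast; nlinarith
    · have := (summable_nat_add_iff (f := fun m : ℕ => ((x + m)^2)⁻¹) 1).2 (summable_aux hx le_rfl)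
      convert this using 2 with m
    · refine Summable.of_nonneg_of_le (fun m => ?_) (fun m => ?_) (summable_aux hx le_rfl)
      · have h1 : (0:ℝ) < x + m := aux_pos hx m
        have h2 : x + (m:ℝ) ≤ x + ((m:ℕ)+1:ℕ) := by push_cast; linarith
        simp only [sub_nonneg]
        exact inv_anti₀ h1 h2
      · have h1 : (0:ℝ) < x + m := aux_pos hx m
        have h2 : (0:ℝ) < x + ((m+1:ℕ):ℝ) := aux_pos hx (m+1)
        have key : (x + m)⁻¹ - (x + ((m+1:ℕ):ℝ))⁻¹ = ((x+m) * (x + ((m+1:ℕ):ℝ)))⁻¹ := by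
          push_cast; field_simp; ring
        rw [key]
        apply inv_anti₀ (by positivity)
        push_cast; nlinarith
  linarith

lemma T_ge_sq {x : ℝ} (hx : 0 < x) : (x ^ 2)⁻¹ ≤ T x := by
  have := Summable.le_tsum (summable_aux hx le_rfl (k := 2)) 0 (fun m _ => by positivity)
  simp at this
  exact this

lemma T_ge_inv {x : ℝ} (hx : 0 < x) : x⁻¹ ≤ T x := by
  rw [← tsum_telescope hx]
  refine Summable.tsum_le_tsum (fun m => ?_) ?_ (summable_aux hx le_rfl)
  · have h1 : (0:ℝ) < x + m := aux_pos hx m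
    have h2 : (0:ℝ) < x + ((m+1:ℕ):ℝ) := aux_pos hx (m+1)
    have key : (x + m)⁻¹ - (x + ((m+1:ℕ):ℝ))⁻¹ = ((x+m) * (x + ((m+1:ℕ):ℝ)))⁻¹ := by
      push_cast; field_simp; ring
    rw [key]
    apply inv_anti₀ (by positivity)
    push_cast; nlinarith
  · refine Summable.of_nonneg_of_le (fun m => ?_) (fun m => ?_) (summable_aux hx le_rfl)
    · have h1 : (0:ℝ) < x + m := aux_pos hx m
      have h2 : x + (m:ℝ) ≤ x + ((m:ℕ)+1:ℕ) := by push_cast; linarith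
      simp only [sub_nonneg]
      exact inv_anti₀ h1 h2
    · have h1 : (0:ℝ) < x + m := aux_pos hx m
      have h2 : (0:ℝ) < x + ((m+1:ℕ):ℝ) := aux_pos hx (m+1)
      have key : (x + m)⁻¹ - (x + ((m+1:ℕ):ℝ))⁻¹ = ((x+m) * (x + ((m+1:ℕ):ℝ)))⁻¹ := by
        push_cast; field_simp; ring
      rw [key]
      apply inv_anti₀ (by positivity)
      push_cast; nlinarith

/-- Cauchy-Schwarz for the series -/
lemma cauchy_schwarz {x : ℝ} (hx : 0 < x) :
    (∑' m : ℕ, ((x + m) ^ 3)⁻¹) ^ 2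
      ≤ (∑' m : ℕ, ((x + m) ^ 4)⁻¹) * ∑' m : ℕ, ((x + m) ^ 2)⁻¹ := by
  have h4 := summable_aux hx (k := 4) (by norm_num)
  have h2 := summable_aux hx (k := 2) le_rfl
  have h3 := summable_aux hx (k := 3) (by norm_num)
  have key : ∀ n : ℕ, (∑ m ∈ range n, ((x + m) ^ 3)⁻¹) ^ 2
      ≤ (∑' m : ℕ, ((x + m) ^ 4)⁻¹) * ∑' m : ℕ, ((x + m) ^ 2)⁻¹ := by
    intro n
    have cs := Finset.sum_mul_sq_le_sq_mul_sq (range n)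
      (fun m : ℕ => ((x + m) ^ 2)⁻¹) (fun m : ℕ => (x + m)⁻¹)
    have e1 : ∀ m : ℕ, ((x + m) ^ 2)⁻¹ * (x + m)⁻¹ = ((x + m) ^ 3)⁻¹ := by
      intro m; rw [← mul_inv]; ring_nf
    have e2 : ∀ m : ℕ, (((x + m) ^ 2)⁻¹) ^ 2 = ((x + m) ^ 4)⁻¹ := by
      intro m; rw [← inv_pow, ← pow_mul]; norm_num
    have e3 : ∀ m : ℕ, ((x + m)⁻¹) ^ 2 = ((x + m) ^ 2)⁻¹ := by
      intro m; rw [← inv_pow]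
    simp_rw [e1, e2, e3] at cs
    refine cs.trans (mul_le_mul ?_ ?_ ?_ ?_)
    · exact Summable.sum_le_tsum _ (fun m _ => by positivity) h4
    · exact Summable.sum_le_tsum _ (fun m _ => by positivity) h2
    · exact Finset.sum_nonneg (fun m _ => by positivity)
    · exact (A4_pos hx).le
  have hl : Tendsto (fun n : ℕ => (∑ m ∈ range n, ((x + m) ^ 3)⁻¹) ^ 2) atTop
      (𝓝 ((∑' m : ℕ, ((x + m) ^ 3)⁻¹) ^ 2)) :=
    (h3.hasSum.tendsto_sum_nat).pow 2
  exact le_of_tendsto hl (Eventually.of_forall key)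

end Polygamma

namespace Polygamma

open Set

lemma tuo_succ {F : ℕ → ℝ → ℝ} {f : ℝ → ℝ} {s : Set ℝ}
    (h : TendstoUniformlyOn F f atTop s) :
    TendstoUniformlyOn (fun n => F (n + 1)) f atTop s := by
  rw [Metric.tendstoUniformlyOn_iff] at h ⊢
  intro ε hε
  exact (tendsto_add_atTop_nat 1).eventually (h ε hε)

lemma tlu_aux (c : ℝ) (k : ℕ) (hk : 2 ≤ k) :
    TendstoLocallyUniformlyOn
      (fun (n : ℕ) (y : ℝ) => ∑ m ∈ Finset.range (n + 1), c * ((y + m) ^ k)⁻¹)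
      (fun y => ∑' m : ℕ, c * ((y + m) ^ k)⁻¹) atTop (Ioi 0) := by
  rw [tendstoLocallyUniformlyOn_iff_forall_isCompact isOpen_Ioi]
  intro K hK hKc
  rcases K.eq_empty_or_nonempty with rfl | hne
  · simp [tendstoUniformlyOn_empty]
  have ha : sInf K ∈ K := hKc.sInf_mem hne
  set a := sInf K with ha_def
  have hapos : 0 < a := hK ha
  have hmem : ∀ y ∈ K, a ≤ y := fun y hy => csInf_le hKc.bddBelow hy
  have key : TendstoUniformlyOn
      (fun (n : ℕ) (y : ℝ) => ∑ m ∈ Finset.range n, c * ((y + m) ^ k)⁻¹)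
      (fun y => ∑' m : ℕ, c * ((y + m) ^ k)⁻¹) atTop K := by
    apply tendstoUniformlyOn_tsum_nat
      (u := fun m : ℕ => |c| * ((a + m) ^ k)⁻¹)
      (((summable_aux hapos hk)).mul_left _)
    intro m y hy
    have hya : 0 < y := hK hy
    have h1 : (0:ℝ) < a + m := aux_pos hapos m
    have h2 : (0:ℝ) < y + m := aux_pos hya m
    rw [Real.norm_eq_abs, abs_mul, abs_inv, abs_of_pos (show (0:ℝ) < (y + m) ^ k by positivity)]
    apply mul_le_mul_of_nonneg_left _ (abs_nonneg c)
    apply inv_anti₀ (by positivity)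
    exact pow_le_pow_left₀ h1.le (by linarith [hmem y hy]) k
  exact tuo_succ key

lemma hd_pow {x : ℝ} (hx : 0 < x) (m k : ℕ) (hk : 1 ≤ k) :
    HasDerivAt (fun y : ℝ => ((y + m) ^ k)⁻¹) (-(k : ℝ) * ((x + m) ^ (k + 1))⁻¹) x := by
  have h0 : (0:ℝ) < x + m := aux_pos hx m
  have h1 : HasDerivAt (fun y : ℝ => y + m) 1 x := (hasDerivAt_id x).add_const _
  have h2 := h1.fun_pow k
  have h3 := h2.fun_inv (pow_pos h0 k).ne'
  refine h3.congr_deriv (Eq.symm ?_)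
  have hne : (x + m) ≠ 0 := h0.ne'
  rw [eq_div_iff (by positivity)]
  have e : ((x + m) ^ k) ^ 2 = (x + m) ^ (k + 1) * (x + m) ^ (k - 1) := by
    rw [← pow_mul, ← pow_add]
    congr 1
    omega
  rw [e]
  field_simp

lemma tendsto_partial_sums {x : ℝ} (hx : 0 < x) (c : ℝ) (k : ℕ) (hk : 2 ≤ k) :
    Tendsto (fun n : ℕ => ∑ m ∈ Finset.range (n + 1), c * ((x + m) ^ k)⁻¹) atTop
      (𝓝 (∑' m : ℕ, c * ((x + m) ^ k)⁻¹)) := by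
  have hs : Summable (fun m : ℕ => c * ((x + m) ^ k)⁻¹) := (summable_aux hx hk).mul_left _
  exact (hs.hasSum.tendsto_sum_nat).comp (tendsto_add_atTop_nat 1)

lemma hasDerivAt_T {x : ℝ} (hx : 0 < x) : HasDerivAt T (P x) x := by
  have h1 : ∀ᶠ (n : ℕ) in atTop, ∀ y ∈ Ioi (0:ℝ),
      HasDerivAt (fun y : ℝ => ∑ m ∈ Finset.range (n + 1), ((y + m) ^ 2)⁻¹)
        (∑ m ∈ Finset.range (n + 1), (-2) * ((y + m) ^ 3)⁻¹) y := by
    filter_upwards with n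
    intro y hy
    apply HasDerivAt.fun_sum
    intro m _
    have := hd_pow (mem_Ioi.1 hy) m 2 (by norm_num)
    exact this.congr_deriv (by norm_num)
  have h2 : ∀ y ∈ Ioi (0:ℝ), Tendsto
      (fun n : ℕ => ∑ m ∈ Finset.range (n + 1), ((y + m) ^ 2)⁻¹) atTop (𝓝 (T y)) := by
    intro y hy
    have h := tendsto_partial_sums (mem_Ioi.1 hy) 1 2 le_rfl
    simp only [one_mul] at h
    exact h
  have key := hasDerivAt_of_tendstoLocallyUniformlyOn (g := T) isOpen_Ioi
    (tlu_aux (-2) 3 (by norm_num)) h1 h2 (mem_Ioi.2 hx)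
  exact key

lemma hasDerivAt_P {x : ℝ} (hx : 0 < x) : HasDerivAt P (P2 x) x := by
  have h1 : ∀ᶠ (n : ℕ) in atTop, ∀ y ∈ Ioi (0:ℝ),
      HasDerivAt (fun y : ℝ => ∑ m ∈ Finset.range (n + 1), (-2) * ((y + m) ^ 3)⁻¹)
        (∑ m ∈ Finset.range (n + 1), 6 * ((y + m) ^ 4)⁻¹) y := by
    filter_upwards with n
    intro y hy
    apply HasDerivAt.fun_sum
    intro m _
    have := (hd_pow (mem_Ioi.1 hy) m 3 (by norm_num)).const_mul (-2 : ℝ)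
    refine this.congr_deriv ?_
    push_cast
    ring
  have h2 : ∀ y ∈ Ioi (0:ℝ), Tendsto
      (fun n : ℕ => ∑ m ∈ Finset.range (n + 1), (-2) * ((y + m) ^ 3)⁻¹) atTop (𝓝 (P y)) := by
    intro y hy
    rw [P]
    exact tendsto_partial_sums (mem_Ioi.1 hy) (-2) 3 (by norm_num)
  have key := hasDerivAt_of_tendstoLocallyUniformlyOn (g := P) isOpen_Ioi
    (tlu_aux 6 4 (by norm_num)) h1 h2 (mem_Ioi.2 hx)
  exact key

end Polygamma

namespace Polygamma

open Set Real

noncomputable def d (n : ℕ) (y : ℝ) : ℝ :=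
  Real.log n - ∑ m ∈ Finset.range (n + 1), (y + m)⁻¹

noncomputable def D (x : ℝ) : ℝ :=
  -Real.eulerMascheroniConstant - x⁻¹ + ∑' m : ℕ, (((m : ℝ) + 1)⁻¹ - (x + (m + 1))⁻¹)

lemma d_eq {n : ℕ} (hn : 1 ≤ n) (y : ℝ) :
    d n y = -Real.eulerMascheroniSeq' n + (-y⁻¹)
      + ∑ m ∈ Finset.range n, (((m : ℝ) + 1)⁻¹ - (y + (m + 1))⁻¹) := by
  have hsum : ∑ m ∈ Finset.range (n + 1), (y + m)⁻¹
      = (∑ m ∈ Finset.range n, (y + ((m : ℝ) + 1))⁻¹) + y⁻¹ := by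
    rw [Finset.sum_range_succ' (fun m : ℕ => (y + m)⁻¹) n]
    congr 1
    · refine Finset.sum_congr rfl fun m _ => ?_
      push_cast
      ring_nf
    · norm_num
  have hh : ((harmonic n : ℚ) : ℝ) = ∑ m ∈ Finset.range n, ((m : ℝ) + 1)⁻¹ := by
    rw [harmonic]
    push_cast
    exact Finset.sum_congr rfl fun m _ => by rw [add_comm]
  rw [d, hsum, Real.eulerMascheroniSeq', if_neg (by omega), Finset.sum_sub_distrib, hh]
  push_cast
  ring

lemma tuo_refl (f : ℝ → ℝ) (s : Set ℝ) : TendstoUniformlyOn (fun _ : ℕ => f) f atTop s := by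
  rw [Metric.tendstoUniformlyOn_iff]
  intro ε hε
  filter_upwards with n x _
  simpa using hε

lemma tlu_d : TendstoLocallyUniformlyOn (fun n y => d n y) D atTop (Ioi 0) := by
  rw [tendstoLocallyUniformlyOn_iff_forall_isCompact isOpen_Ioi]
  intro K hK hKc
  rcases K.eq_empty_or_nonempty with rfl | hne
  · simp [tendstoUniformlyOn_empty]
  obtain ⟨b, hb⟩ := hKc.bddAbove
  have hbpos : 0 < b := lt_of_lt_of_le (hK hne.choose_spec) (hb hne.choose_spec)
  have C1 : TendstoUniformlyOn (fun (n : ℕ) (_ : ℝ) => -Real.eulerMascheroniSeq' n)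
      (fun _ => -Real.eulerMascheroniConstant) atTop K :=
    (Real.tendsto_eulerMascheroniSeq'.neg).tendstoUniformlyOn_const K
  have C2 : TendstoUniformlyOn (fun (_ : ℕ) (y : ℝ) => -y⁻¹) (fun y => -y⁻¹) atTop K :=
    tuo_refl _ K
  have C3 : TendstoUniformlyOn
      (fun (n : ℕ) (y : ℝ) => ∑ m ∈ Finset.range n, (((m : ℝ) + 1)⁻¹ - (y + (m + 1))⁻¹))
      (fun y => ∑' m : ℕ, (((m : ℝ) + 1)⁻¹ - (y + (m + 1))⁻¹)) atTop K := by
    apply tendstoUniformlyOn_tsum_nat (u := fun m : ℕ => b * (((m : ℝ) + 1) ^ 2)⁻¹)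
    · apply Summable.mul_left
      have := (Real.summable_nat_pow_inv (p := 2)).2 one_lt_two
      have h2 := (summable_nat_add_iff (f := fun n : ℕ => ((n : ℝ) ^ 2)⁻¹) 1).2 this
      exact h2.congr fun m => by simp
    · intro m y hy
      have hy0 : 0 < y := hK hy
      have hyb : y ≤ b := hb hy
      have h1 : (0:ℝ) < (m : ℝ) + 1 := by positivity
      have h2 : (0:ℝ) < y + ((m : ℝ) + 1) := by positivity
      have key : ((m : ℝ) + 1)⁻¹ - (y + ((m : ℝ) + 1))⁻¹
          = y * (((m : ℝ) + 1) * (y + ((m : ℝ) + 1)))⁻¹ := by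
        field_simp
        ring
      rw [Real.norm_eq_abs, key, abs_of_pos (by positivity)]
      have : (((m : ℝ) + 1) * (y + ((m : ℝ) + 1)))⁻¹ ≤ (((m : ℝ) + 1) ^ 2)⁻¹ := by
        apply inv_anti₀ (by positivity)
        nlinarith
      calc y * (((m : ℝ) + 1) * (y + ((m : ℝ) + 1)))⁻¹
          ≤ b * (((m : ℝ) + 1) * (y + ((m : ℝ) + 1)))⁻¹ := by
            apply mul_le_mul_of_nonneg_right hyb (by positivity)
        _ ≤ b * (((m : ℝ) + 1) ^ 2)⁻¹ := by
            apply mul_le_mul_of_nonneg_left this hbpos.le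
  have hcomb := (C1.add C2).add C3
  have h4 := hcomb.congr_right (g := D) (fun y _ => by simp only [Pi.add_apply, D]; ring)
  apply h4.congr
  filter_upwards [eventually_ge_atTop 1] with n hn
  intro y hy
  simp only [Pi.add_apply]
  rw [d_eq hn y]

end Polygamma

namespace Polygamma

open Set Real

lemma hasDerivAt_logGammaSeq {y : ℝ} (hy : 0 < y) (n : ℕ) :
    HasDerivAt (fun z : ℝ => Real.BohrMollerup.logGammaSeq z n) (d n y) y := by
  have h1 : HasDerivAt (fun z : ℝ => z * Real.log n + Real.log (Nat.factorial n))
      (Real.log n) y := by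
    simpa using ((hasDerivAt_id y).mul_const (Real.log n)).add_const (Real.log (Nat.factorial n))
  have h2 : HasDerivAt (fun z : ℝ => ∑ m ∈ Finset.range (n + 1), Real.log (z + m))
      (∑ m ∈ Finset.range (n + 1), (y + m)⁻¹) y := by
    apply HasDerivAt.fun_sum
    intro m _
    have hm : (0:ℝ) < y + m := aux_pos hy m
    have := (Real.hasDerivAt_log hm.ne').comp y ((hasDerivAt_id y).add_const (m : ℝ))
    exact this.congr_deriv (by simp)
  have hEq : (fun z : ℝ => Real.BohrMollerup.logGammaSeq z n)
      = (fun z : ℝ => z * Real.log n + Real.log (Nat.factorial n)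
          - ∑ m ∈ Finset.range (n + 1), Real.log (z + m)) := rfl
  have hd : d n y = Real.log n - ∑ m ∈ Finset.range (n + 1), (y + m)⁻¹ := rfl
  rw [hEq, hd]
  exact h1.sub h2

lemma hasDerivAt_logGamma {x : ℝ} (hx : 0 < x) :
    HasDerivAt (fun y : ℝ => Real.log (Real.Gamma y)) (D x) x := by
  have h1 : ∀ᶠ (n : ℕ) in atTop, ∀ y ∈ Ioi (0:ℝ),
      HasDerivAt (fun z : ℝ => Real.BohrMollerup.logGammaSeq z n) (d n y) y := by
    filter_upwards with n
    intro y hy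
    exact hasDerivAt_logGammaSeq (mem_Ioi.1 hy) n
  have h2 : ∀ y ∈ Ioi (0:ℝ), Tendsto (fun n : ℕ => Real.BohrMollerup.logGammaSeq y n) atTop
      (𝓝 (Real.log (Real.Gamma y))) := fun y hy => Real.BohrMollerup.tendsto_log_gamma (mem_Ioi.1 hy)
  exact hasDerivAt_of_tendstoLocallyUniformlyOn isOpen_Ioi tlu_d h1 h2 (mem_Ioi.2 hx)

lemma digamma_eq {x : ℝ} (hx : 0 < x) : digamma x = D x :=
  (hasDerivAt_logGamma hx).deriv

lemma hasDerivAt_digamma {x : ℝ} (hx : 0 < x) : HasDerivAt digamma (T x) x := by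
  have h1 : ∀ᶠ (n : ℕ) in atTop, ∀ y ∈ Ioi (0:ℝ),
      HasDerivAt (fun y : ℝ => d n y)
        (∑ m ∈ Finset.range (n + 1), (1:ℝ) * ((y + m) ^ 2)⁻¹) y := by
    filter_upwards with n
    intro y hy
    have hy0 := mem_Ioi.1 hy
    have h2 : HasDerivAt (fun y : ℝ => ∑ m ∈ Finset.range (n + 1), (y + m)⁻¹)
        (∑ m ∈ Finset.range (n + 1), -(1:ℝ) * ((y + m) ^ 2)⁻¹) y := by
      apply HasDerivAt.fun_sum
      intro m _
      have := hd_pow hy0 m 1 le_rfl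
      simp only [pow_one] at this
      exact this.congr_deriv (by norm_num)
    have h3 := (hasDerivAt_const y (Real.log ↑n)).sub h2
    have hEq : (fun y : ℝ => d n y) = (fun y : ℝ =>
        Real.log ↑n - ∑ m ∈ Finset.range (n + 1), (y + m)⁻¹) := rfl
    rw [hEq]
    refine h3.congr_deriv ?_
    rw [zero_sub, ← Finset.sum_neg_distrib]
    exact Finset.sum_congr rfl fun m _ => by ring
  have h2 : ∀ y ∈ Ioi (0:ℝ), Tendsto (fun n : ℕ => d n y) atTop (𝓝 (digamma y)) := by
    intro y hy
    rw [digamma_eq (mem_Ioi.1 hy)]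
    exact tlu_d.tendsto_at hy
  have key := hasDerivAt_of_tendstoLocallyUniformlyOn (g := digamma) isOpen_Ioi
    (tlu_aux 1 2 le_rfl) h1 h2 (mem_Ioi.2 hx)
  have : T x = ∑' m : ℕ, (1:ℝ) * ((x + m) ^ 2)⁻¹ := by rw [T]; simp
  rw [this]
  exact key

lemma trigamma_eq {x : ℝ} (hx : 0 < x) : trigamma x = T x :=
  (hasDerivAt_digamma hx).deriv

lemma hasDerivAt_trigamma {x : ℝ} (hx : 0 < x) : HasDerivAt trigamma (P x) x := by
  have h1 : ∀ᶠ (n : ℕ) in atTop, ∀ y ∈ Ioi (0:ℝ),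
      HasDerivAt (fun y : ℝ => ∑ m ∈ Finset.range (n + 1), ((y + m) ^ 2)⁻¹)
        (∑ m ∈ Finset.range (n + 1), (-2) * ((y + m) ^ 3)⁻¹) y := by
    filter_upwards with n
    intro y hy
    apply HasDerivAt.fun_sum
    intro m _
    have := hd_pow (mem_Ioi.1 hy) m 2 (by norm_num)
    exact this.congr_deriv (by norm_num)
  have h2 : ∀ y ∈ Ioi (0:ℝ), Tendsto
      (fun n : ℕ => ∑ m ∈ Finset.range (n + 1), ((y + m) ^ 2)⁻¹) atTop (𝓝 (trigamma y)) := by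
    intro y hy
    rw [trigamma_eq (mem_Ioi.1 hy)]
    have h := tendsto_partial_sums (mem_Ioi.1 hy) 1 2 le_rfl
    simp only [one_mul] at h
    exact h
  have key := hasDerivAt_of_tendstoLocallyUniformlyOn (g := trigamma) isOpen_Ioi
    (tlu_aux (-2) 3 (by norm_num)) h1 h2 (mem_Ioi.2 hx)
  exact key

lemma polygammaTwo_eq {x : ℝ} (hx : 0 < x) : polygammaTwo x = P x :=
  (hasDerivAt_trigamma hx).deriv

end Polygamma

namespace Polygamma

open Set Real

lemma numerator_pos {x : ℝ} (hx : 0 < x) : 0 < P2 x * T x - P x * P x := by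
  have hcs := cauchy_schwarz hx
  have h4 := A4_pos hx
  have h2 := T_pos hx
  have hT : T x = ∑' m : ℕ, ((x + m) ^ 2)⁻¹ := rfl
  rw [P_eq, P2_eq]
  rw [hT] at h2 ⊢
  nlinarith [h4, h2, hcs]

noncomputable def Q (x : ℝ) : ℝ := P x / T x

lemma hasDerivAt_Q {x : ℝ} (hx : 0 < x) :
    HasDerivAt Q ((P2 x * T x - P x * P x) / (T x) ^ 2) x :=
  (hasDerivAt_P hx).div (hasDerivAt_T hx) (T_pos hx).ne'

lemma Q_strictMono : StrictMonoOn Q (Ioi 0) := by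
  apply strictMonoOn_of_deriv_pos (convex_Ioi 0)
  · exact fun x hx => (hasDerivAt_Q hx).continuousAt.continuousWithinAt
  · intro x hx
    rw [interior_Ioi] at hx
    rw [(hasDerivAt_Q hx).deriv]
    exact div_pos (numerator_pos hx) (pow_pos (T_pos hx) 2)

lemma hasDerivAt_logT {x : ℝ} (hx : 0 < x) :
    HasDerivAt (fun y => Real.log (T y)) (Q x) x :=
  (hasDerivAt_T hx).log (T_pos hx).ne'

end Polygamma

open Polygamma Set Real Filter

/-- For `c > 1` and `γ > 0` small enough there exists a unique `z* > 0` with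
`ψ₁(z*) = c·ψ₁(z* + γ)` (i.e. `H''_{c,γ}(z*) = 0`), and moreover
`ψ₂(z*) - c·ψ₂(z* + γ) < 0` there. -/
theorem exists_unique_critical_point (c : ℝ) (hc : 1 < c) :
    ∃ γstar > (0 : ℝ), ∀ γ : ℝ, 0 < γ → γ < γstar →
      (∃! z : ℝ, 0 < z ∧ trigamma z = c * trigamma (z + γ)) ∧
      (∀ z : ℝ, 0 < z → trigamma z = c * trigamma (z + γ) →
        polygammaTwo z - c * polygammaTwo (z + γ) < 0) := by
  refine ⟨1, one_pos, fun γ hγ _ => ?_⟩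
  have hc0 : (0:ℝ) < c := lt_trans one_pos hc
  set h : ℝ → ℝ := fun z => Real.log (T z) - Real.log (T (z + γ)) with hh
  have hder : ∀ z ∈ Ioi (0:ℝ), HasDerivAt h (Q z - Q (z + γ)) z := by
    intro z hz
    have hz0 := mem_Ioi.1 hz
    have h1 := hasDerivAt_logT hz0
    have h2 : HasDerivAt (fun z : ℝ => Real.log (T (z + γ))) (Q (z + γ)) z := by
      have := (hasDerivAt_logT (by linarith : 0 < z + γ)).comp z
        ((hasDerivAt_id z).add_const γ)
      exact this.congr_deriv (by simp)
    exact h1.sub h2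
  have hanti : StrictAntiOn h (Ioi 0) := by
    apply strictAntiOn_of_deriv_neg (convex_Ioi 0)
    · exact fun z hz => (hder z hz).continuousAt.continuousWithinAt
    · intro z hz
      rw [interior_Ioi] at hz
      rw [(hder z hz).deriv]
      have := Q_strictMono hz (mem_Ioi.2 (by linarith [mem_Ioi.1 hz] : (0:ℝ) < z + γ))
        (by linarith : z < z + γ)
      linarith
  -- root equivalence
  have hiff : ∀ z : ℝ, 0 < z → (trigamma z = c * trigamma (z + γ) ↔ h z = Real.log c) := by
    intro z hz
    have hz' : 0 < z + γ := by linarith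
    rw [trigamma_eq hz, trigamma_eq hz']
    constructor
    · intro hroot
      rw [hh]
      simp only
      rw [hroot, Real.log_mul hc0.ne' (T_pos hz').ne']
      ring
    · intro hlog
      have : Real.log (T z) = Real.log (c * T (z + γ)) := by
        rw [Real.log_mul hc0.ne' (T_pos hz').ne']
        have : Real.log (T z) - Real.log (T (z + γ)) = Real.log c := hlog
        linarith
      have := congrArg Real.exp this
      rwa [Real.exp_log (T_pos hz), Real.exp_log (mul_pos hc0 (T_pos hz'))] at this
  -- existence bounds
  obtain ⟨M, hM⟩ : ∃ M : ℝ, M = γ⁻¹ + (γ ^ 2)⁻¹ := ⟨_, rfl⟩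
  have hMpos : 0 < M := by rw [hM]; positivity
  obtain ⟨zlo, hzlo_def⟩ : ∃ z : ℝ, z = (c * M + 1)⁻¹ := ⟨_, rfl⟩
  have hzlo_pos : 0 < zlo := by rw [hzlo_def]; positivity
  have hzlo_le : zlo ≤ 1 := by
    rw [hzlo_def]
    rw [inv_le_one_iff₀]
    right
    nlinarith
  obtain ⟨zhi, hzhi_def⟩ : ∃ z : ℝ, z = 1 + (1 + 2 * γ) / (c - 1) := ⟨_, rfl⟩
  have hzhi_ge : 1 ≤ zhi := by
    rw [hzhi_def]
    have : 0 < (1 + 2 * γ) / (c - 1) := div_pos (by linarith) (by linarith)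
    linarith
  have hzhi_pos : 0 < zhi := by linarith
  have hT_lo : c * T (zlo + γ) ≤ T zlo := by
    have h1 : T (zlo + γ) ≤ (zlo + γ)⁻¹ + ((zlo + γ) ^ 2)⁻¹ := T_le (by positivity)
    have h2 : (zlo + γ)⁻¹ ≤ γ⁻¹ := inv_anti₀ hγ (by linarith)
    have h3 : ((zlo + γ) ^ 2)⁻¹ ≤ (γ ^ 2)⁻¹ := by
      apply inv_anti₀ (by positivity)
      nlinarith
    have h4 : T (zlo + γ) ≤ M := by rw [hM]; linarith
    have h5 : (zlo ^ 2)⁻¹ ≤ T zlo := T_ge_sq hzlo_pos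
    have h6 : (zlo ^ 2)⁻¹ = (c * M + 1) ^ 2 := by
      rw [hzlo_def, ← inv_pow, inv_inv]
    have e1 : c * T (zlo + γ) ≤ c * M := mul_le_mul_of_nonneg_left h4 hc0.le
    have e2 : c * M + 1 ≤ (c * M + 1) ^ 2 := by nlinarith [mul_pos hc0 hMpos]
    linarith
  have hT_hi : T zhi ≤ c * T (zhi + γ) := by
    have h1 : T zhi ≤ zhi⁻¹ + (zhi ^ 2)⁻¹ := T_le hzhi_pos
    have h2 : (zhi + γ)⁻¹ ≤ T (zhi + γ) := T_ge_inv (by linarith)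
    have hz2 : (0:ℝ) < zhi ^ 2 := by positivity
    have hzγ : (0:ℝ) < zhi + γ := by linarith
    have hkey : zhi⁻¹ + (zhi ^ 2)⁻¹ ≤ c * (zhi + γ)⁻¹ := by
      have expand : zhi⁻¹ + (zhi ^ 2)⁻¹ = (zhi + 1) / zhi ^ 2 := by
        field_simp
      have expand2 : c * (zhi + γ)⁻¹ = c / (zhi + γ) := by rw [div_eq_mul_inv]
      rw [expand, expand2, div_le_div_iff₀ hz2 hzγ]
      have hfact : (c - 1) * zhi = (c - 1) + (1 + 2 * γ) := by
        rw [hzhi_def]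
        field_simp [sub_ne_zero.mpr hc.ne']
      have h7 : (1 + 2 * γ) * zhi ≤ ((c - 1) * zhi) * zhi := by
        nlinarith [hzhi_ge, hγ, hc]
      nlinarith [h7, hzhi_ge, hγ]
    calc T zhi ≤ zhi⁻¹ + (zhi ^ 2)⁻¹ := h1
      _ ≤ c * (zhi + γ)⁻¹ := hkey
      _ ≤ c * T (zhi + γ) := by
          apply mul_le_mul_of_nonneg_left h2 hc0.le
  
  have hzγlo : (0:ℝ) < zlo + γ := by linarith
  have hzγhi : (0:ℝ) < zhi + γ := by linarith
  have hlog_lo : Real.log c ≤ h zlo := by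
    have hlog := (Real.log_le_log_iff (mul_pos hc0 (T_pos hzγlo)) (T_pos hzlo_pos)).2 hT_lo
    rw [Real.log_mul hc0.ne' (T_pos hzγlo).ne'] at hlog
    simp only [hh]
    linarith
  have hlog_hi : h zhi ≤ Real.log c := by
    have hlog := (Real.log_le_log_iff (T_pos hzhi_pos) (mul_pos hc0 (T_pos hzγhi))).2 hT_hi
    rw [Real.log_mul hc0.ne' (T_pos hzγhi).ne'] at hlog
    simp only [hh]
    linarith
  have hsub : Icc zlo zhi ⊆ Ioi (0:ℝ) := fun t ht => lt_of_lt_of_le hzlo_pos ht.1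
  have hcont : ContinuousOn h (Icc zlo zhi) :=
    fun t ht => ((hder t (hsub ht)).continuousAt).continuousWithinAt
  have hmem : Real.log c ∈ Icc (h zhi) (h zlo) := ⟨hlog_hi, hlog_lo⟩
  obtain ⟨z, hzIcc, hzeq⟩ := intermediate_value_Icc' (le_trans hzlo_le hzhi_ge) hcont hmem
  have hz0 : 0 < z := mem_Ioi.1 (hsub hzIcc)
  constructor
  · refine ⟨z, ⟨hz0, (hiff z hz0).2 hzeq⟩, ?_⟩
    rintro w ⟨hw0, hwroot⟩
    have hw := (hiff w hw0).1 hwroot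
    exact hanti.injOn (mem_Ioi.2 hw0) (mem_Ioi.2 hz0) (by rw [hw, hzeq])
  · intro w hw0 hwroot
    have hw' : (0:ℝ) < w + γ := by linarith
    rw [trigamma_eq hw0, trigamma_eq hw'] at hwroot
    rw [polygammaTwo_eq hw0, polygammaTwo_eq hw']
    have hq := Q_strictMono (mem_Ioi.2 hw0) (mem_Ioi.2 hw') (by linarith : w < w + γ)
    rw [Q, Q] at hq
    have key := (div_lt_div_iff₀ (T_pos hw0) (T_pos hw')).1 hq
    rw [hwroot] at key
    have key2 : P w * T (w + γ) < (c * P (w + γ)) * T (w + γ) := by nlinarith [key]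
    have := lt_of_mul_lt_mul_right key2 (T_pos hw').le
    linarith
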